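/- (Tracial boundedness of the standard decoherence functional, finite-dimensional form.) Let n ≥ 1 and m ≥ 1 and let ρ ∈ M_n(ℂ) be positive semidefinite with tr(ρ) = 1. Then the representing matrix 𝔛_ρ can be chosen with ℓ²-operator norm at most one: there exists a complex matrix 𝔛_ρ indexed by ((Fin m → Fin n) × (Fin m → Fin n)) × ((Fin m → Fin n) × (Fin m → Fin n)) with ‖𝔛_ρ‖ ≤ 1 (operator norm induced by the ℓ² norm on the corresponding finite-dimensional coordinate space) such that for all families h, k : Fin m → M_n(ℂ): tr(h_{m-1} ⋯ h_1 h_0 ρ k_0 k_1 ⋯ k_{m-1}) = tr( (K(h) ⊠ K(k)) 𝔛_ρ ). -/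

import Mathlib

open Matrix
open scoped Kronecker ComplexOrder

section Aux

lemma snoc_zero' {n m : ℕ} (d : Fin (m+1) → Fin n) (p : Fin n) :
    (Fin.snoc d p : Fin (m+2) → Fin n) 0 = d 0 := by
  rw [show (0 : Fin (m+2)) = Fin.castSucc 0 from rfl, Fin.snoc_castSucc]

lemma snoc_succ' {n m : ℕ} (d : Fin (m+1) → Fin n) (p : Fin n) (i : Fin (m+1)) :
    (Fin.snoc d p : Fin (m+2) → Fin n) i.succ
      = (Fin.snoc (Fin.tail d) p : Fin (m+1) → Fin n) i := by
  induction i using Fin.lastCases with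
  | last => rw [Fin.succ_last, Fin.snoc_last, Fin.snoc_last]
  | cast j => rw [Fin.succ_castSucc, Fin.snoc_castSucc, Fin.snoc_castSucc, Fin.tail]

lemma revProd_entry {n : ℕ} : ∀ {m : ℕ} (h : Fin (m+1) → Matrix (Fin n) (Fin n) ℂ)
    (p q : Fin n),
    (List.ofFn h).reverse.prod p q =
      ∑ c : Fin (m+1) → Fin n,
        if c 0 = q then ∏ i, h i ((Fin.snoc (Fin.tail c) p : Fin (m+1) → Fin n) i) (c i)
        else 0 := by
  intro m
  induction m with
  | zero =>
    intro h p q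
    rw [List.ofFn_succ, List.ofFn_zero]
    simp only [List.reverse_singleton, List.prod_singleton]
    rw [← (Fin.consEquiv (fun _ : Fin 1 => Fin n)).sum_comp]
    rw [Fintype.sum_prod_type]
    simp [Fin.snoc, Fin.prod_univ_one, Finset.sum_ite_eq']
  | succ m ih =>
    intro h p q
    rw [List.ofFn_succ, List.reverse_cons, List.prod_append, List.prod_singleton,
      Matrix.mul_apply]
    simp_rw [ih (fun i => h i.succ) p]
    rw [← (Fin.consEquiv (fun _ : Fin (m+2) => Fin n)).sum_comp]
    rw [Fintype.sum_prod_type]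
    simp only [Fin.consEquiv, Equiv.coe_fn_mk, Fin.cons_zero, Fin.tail_cons]
    conv_rhs => rw [Finset.sum_comm]
    simp only [Finset.sum_ite_eq', Finset.mem_univ, if_true]
    simp only [Finset.sum_mul, ite_mul, zero_mul]
    conv_lhs => rw [Finset.sum_comm]
    simp only [Finset.sum_ite_eq, Finset.mem_univ, if_true]
    apply Finset.sum_congr rfl
    intro c _
    conv_rhs => rw [Fin.prod_univ_succ]
    simp only [Fin.cons_zero, Fin.cons_succ, snoc_zero', snoc_succ']
    ring

lemma prodEntry {n m : ℕ} (k : Fin (m+1) → Matrix (Fin n) (Fin n) ℂ) (p r : Fin n) :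
    (List.ofFn k).prod r p =
      ∑ c : Fin (m+1) → Fin n,
        if c 0 = r then ∏ i, k i (c i) ((Fin.snoc (Fin.tail c) p : Fin (m+1) → Fin n) i)
        else 0 := by
  have h1 : (List.ofFn k).prod r p
      = ((List.ofFn fun i => (k i)ᵀ).reverse.prod) p r := by
    have h2 : ((List.ofFn k).prod)ᵀ = (List.ofFn fun i => (k i)ᵀ).reverse.prod := by
      rw [Matrix.transpose_list_prod, List.map_ofFn]
      rfl
    rw [← h2, Matrix.transpose_apply]
  rw [h1, revProd_entry]
  refine Finset.sum_congr rfl fun c _ => ?_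
  simp [Matrix.transpose_apply]

lemma frob_le_one {n : ℕ} (ρ : Matrix (Fin n) (Fin n) ℂ) (hρ : ρ.PosSemidef)
    (hρtr : ρ.trace = 1) : ∑ q, ∑ t, ‖ρ q t‖^2 ≤ 1 := by
  obtain ⟨B, hB⟩ : ∃ B : Matrix (Fin n) (Fin n) ℂ, ρ = Bᴴ * B := by
    open MatrixOrder in
    obtain ⟨B, hB⟩ := CStarAlgebra.nonneg_iff_eq_star_mul_self.mp hρ.nonneg
    exact ⟨B, hB⟩
  set c : Fin n → ℝ := fun t => ∑ s, ‖B s t‖^2 with hc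
  have hentry : ∀ q t, ρ q t = ∑ s, (starRingEnd ℂ) (B s q) * B s t := by
    intro q t
    rw [hB, Matrix.mul_apply]
    simp [Matrix.conjTranspose_apply]
  have hdiag : ∀ t, ρ t t = (c t : ℂ) := by
    intro t
    rw [hentry, hc]
    push_cast
    refine Finset.sum_congr rfl fun s _ => ?_
    rw [mul_comm, Complex.mul_conj, Complex.normSq_eq_norm_sq]
    norm_cast
  have hcsum : ∑ t, c t = 1 := by
    have h2 : ρ.trace = ((∑ t, c t : ℝ) : ℂ) := by
      rw [Matrix.trace]
      push_cast
      exact Finset.sum_congr rfl fun t _ => hdiag t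
    rw [hρtr] at h2
    exact_mod_cast h2.symm
  have hqt : ∀ q t, ‖ρ q t‖^2 ≤ c q * c t := by
    intro q t
    have h1 : ‖ρ q t‖ ≤ ∑ s, ‖B s q‖ * ‖B s t‖ := by
      rw [hentry]
      refine (norm_sum_le _ _).trans ?_
      refine Finset.sum_le_sum fun s _ => ?_
      rw [norm_mul, RCLike.norm_conj]
    calc ‖ρ q t‖^2 ≤ (∑ s, ‖B s q‖ * ‖B s t‖)^2 := by
          exact pow_le_pow_left₀ (norm_nonneg _) h1 2
      _ ≤ (∑ s, ‖B s q‖^2) * (∑ s, ‖B s t‖^2) :=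
          Finset.sum_mul_sq_le_sq_mul_sq _ _ _
      _ = c q * c t := rfl
  calc ∑ q, ∑ t, ‖ρ q t‖^2 ≤ ∑ q, ∑ t, c q * c t :=
        Finset.sum_le_sum fun q _ => Finset.sum_le_sum fun t _ => hqt q t
    _ = (∑ q, c q) * (∑ t, c t) := by rw [Finset.sum_mul_sum]
    _ = 1 := by rw [hcsum]; norm_num

lemma kron_one_mulVec_sq_sum_le {n : ℕ} {J : Type*} [Fintype J] [DecidableEq J]
    (ρ : Matrix (Fin n) (Fin n) ℂ) (hF : ∑ q, ∑ t, ‖ρ q t‖^2 ≤ 1)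
    (u : Fin n × J → ℂ) :
    ∑ x : Fin n × J, ‖((ρ ⊗ₖ (1 : Matrix J J ℂ)) *ᵥ u) x‖^2
      ≤ ∑ x : Fin n × J, ‖u x‖^2 := by
  have hmv : ∀ (q : Fin n) (j : J),
      ((ρ ⊗ₖ (1 : Matrix J J ℂ)) *ᵥ u) (q, j) = ∑ t, ρ q t * u (t, j) := by
    intro q j
    rw [Matrix.mulVec, dotProduct, Fintype.sum_prod_type]
    refine Finset.sum_congr rfl fun t _ => ?_
    simp [Matrix.one_apply, ite_mul, Finset.sum_ite_eq, Finset.mem_univ]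
  have key : ∀ (q : Fin n) (j : J),
      ‖∑ t, ρ q t * u (t, j)‖^2 ≤ (∑ t, ‖ρ q t‖^2) * (∑ t, ‖u (t, j)‖^2) := by
    intro q j
    calc ‖∑ t, ρ q t * u (t, j)‖^2 ≤ (∑ t, ‖ρ q t‖ * ‖u (t, j)‖)^2 := by
          refine pow_le_pow_left₀ (norm_nonneg _) ?_ 2
          refine (norm_sum_le _ _).trans ?_
          exact Finset.sum_le_sum fun t _ => (norm_mul _ _).le
      _ ≤ _ := Finset.sum_mul_sq_le_sq_mul_sq _ _ _
  calc ∑ x : Fin n × J, ‖((ρ ⊗ₖ (1 : Matrix J J ℂ)) *ᵥ u) x‖^2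
      = ∑ q, ∑ j, ‖∑ t, ρ q t * u (t, j)‖^2 := by
        rw [Fintype.sum_prod_type]
        exact Finset.sum_congr rfl fun q _ => Finset.sum_congr rfl fun j _ => by rw [hmv]
    _ ≤ ∑ q, ∑ j, (∑ t, ‖ρ q t‖^2) * (∑ t, ‖u (t, j)‖^2) :=
        Finset.sum_le_sum fun q _ => Finset.sum_le_sum fun j _ => key q j
    _ = (∑ q, ∑ t, ‖ρ q t‖^2) * (∑ j, ∑ t, ‖u (t, j)‖^2) := by
        simp_rw [← Finset.mul_sum]
        rw [← Finset.sum_mul]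
    _ ≤ 1 * (∑ j, ∑ t, ‖u (t, j)‖^2) := by
        refine mul_le_mul_of_nonneg_right hF ?_
        positivity
    _ = ∑ x : Fin n × J, ‖u x‖^2 := by
        rw [one_mul, Fintype.sum_prod_type, Finset.sum_comm]

@[simps] def rowE (n mm : ℕ) :
    ((Fin (mm+1) → Fin n) × (Fin (mm+1) → Fin n))
      ≃ (Fin n × ((Fin mm → Fin n) × Fin n × (Fin mm → Fin n))) where
  toFun d := (d.1 0, (Fin.tail d.1, d.2 (Fin.last mm), Fin.init d.2))
  invFun x := (Fin.cons x.1 x.2.1, Fin.snoc x.2.2.2 x.2.2.1)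
  left_inv d := by
    obtain ⟨a, b⟩ := d
    simp [Fin.cons_self_tail, Fin.snoc_init_self]
  right_inv x := by
    obtain ⟨q, f, s, g⟩ := x
    simp

@[simps] def colE (n mm : ℕ) :
    ((Fin (mm+1) → Fin n) × (Fin (mm+1) → Fin n))
      ≃ (Fin n × ((Fin mm → Fin n) × Fin n × (Fin mm → Fin n))) where
  toFun c := (c.2 0, (Fin.init c.1, c.1 (Fin.last mm), Fin.tail c.2))
  invFun x := (Fin.snoc x.2.1 x.2.2.1, Fin.cons x.1 x.2.2.2)
  left_inv c := by
    obtain ⟨a, b⟩ := c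
    simp [Fin.cons_self_tail, Fin.snoc_init_self]
  right_inv x := by
    obtain ⟨t, f, s, g⟩ := x
    simp

@[simps] def shiftE (n mm : ℕ) :
    (Fin n × (Fin (mm+1) → Fin n)) ≃ (Fin n × (Fin (mm+1) → Fin n)) where
  toFun pa := (pa.2 0, Fin.snoc (Fin.tail pa.2) pa.1)
  invFun qa := (qa.2 (Fin.last mm), Fin.cons qa.1 (Fin.init qa.2))
  left_inv pa := by
    obtain ⟨p, a⟩ := pa
    simp [Fin.cons_self_tail]
  right_inv qa := by
    obtain ⟨q, a⟩ := qa
    simp [Fin.snoc_init_self]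

lemma helper1 {α β : Type*} [Fintype α] [Fintype β] [DecidableEq β]
    (F : α → β) (f : α → ℂ) (g : β → ℂ) :
    ∑ q, (∑ a, if F a = q then f a else 0) * g q = ∑ a, f a * g (F a) := by
  simp only [Finset.sum_mul, ite_mul, zero_mul]
  rw [Finset.sum_comm]
  simp [Finset.sum_ite_eq]

lemma helper2 {α β : Type*} [Fintype α] [Fintype β] [DecidableEq β]
    (F : α → β) (f : α → ℂ) (g : β → ℂ) :
    ∑ r, g r * (∑ b, if F b = r then f b else 0) = ∑ b, g (F b) * f b := by
  simp only [Finset.mul_sum, mul_ite, mul_zero]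
  rw [Finset.sum_comm]
  simp [Finset.sum_ite_eq]

end Aux

/-- Tracial boundedness of the standard decoherence functional in
finite dimensions: the representing matrix `X_ρ` can be chosen with ℓ²-operator
norm at most one. -/
theorem standard_df_tracially_bounded {n m : ℕ} (hn : 1 ≤ n) (hm : 1 ≤ m)
    (ρ : Matrix (Fin n) (Fin n) ℂ) (hρ : ρ.PosSemidef) (hρtr : ρ.trace = 1) :
    ∃ X : Matrix ((Fin m → Fin n) × (Fin m → Fin n))
        ((Fin m → Fin n) × (Fin m → Fin n)) ℂ,
      ‖Matrix.toEuclideanCLM (𝕜 := ℂ) X‖ ≤ 1 ∧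
      ∀ h k : Fin m → Matrix (Fin n) (Fin n) ℂ,
        ((List.ofFn h).reverse.prod * ρ * (List.ofFn k).prod).trace =
          (((Matrix.of fun a b : Fin m → Fin n => ∏ i, h i (a i) (b i)) ⊗ₖ
            (Matrix.of fun a b : Fin m → Fin n => ∏ i, k i (a i) (b i))) * X).trace := by
  obtain ⟨mm, rfl⟩ : ∃ mm, m = mm + 1 := ⟨m - 1, (Nat.succ_pred_eq_of_pos hm).symm⟩
  set J := ((Fin mm → Fin n) × Fin n × (Fin mm → Fin n)) with hJ
  set X : Matrix ((Fin (mm+1) → Fin n) × (Fin (mm+1) → Fin n))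
      ((Fin (mm+1) → Fin n) × (Fin (mm+1) → Fin n)) ℂ :=
    (ρ ⊗ₖ (1 : Matrix J J ℂ)).submatrix (rowE n mm) (colE n mm) with hX
  refine ⟨X, ?_, ?_⟩
  · -- norm bound
    have hF := frob_le_one ρ hρ hρtr
    refine ContinuousLinearMap.opNorm_le_bound _ zero_le_one fun v => ?_
    rw [one_mul]
    have hv : (Matrix.toEuclideanCLM (𝕜 := ℂ) X) v
        = (WithLp.equiv 2 _).symm (X *ᵥ ((WithLp.equiv 2 _) v)) := rfl
    rw [hv, EuclideanSpace.norm_eq, EuclideanSpace.norm_eq]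
    apply Real.sqrt_le_sqrt
    simp only [WithLp.equiv_symm_apply, PiLp.toLp_apply]
    rw [hX, Matrix.submatrix_mulVec_equiv]
    calc ∑ d, ‖(((ρ ⊗ₖ (1 : Matrix J J ℂ)) *ᵥ (((WithLp.equiv 2 _) v) ∘ (colE n mm).symm))
            ∘ (rowE n mm)) d‖^2
        = ∑ x, ‖((ρ ⊗ₖ (1 : Matrix J J ℂ)) *ᵥ (((WithLp.equiv 2 _) v) ∘ (colE n mm).symm)) x‖^2 := by
          exact Fintype.sum_equiv (rowE n mm) _ _ (fun d => rfl)
      _ ≤ ∑ x, ‖(((WithLp.equiv 2 _) v) ∘ (colE n mm).symm) x‖^2 :=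
          kron_one_mulVec_sq_sum_le ρ hF _
      _ = ∑ c, ‖v c‖^2 :=
          Fintype.sum_equiv (colE n mm).symm _ _ (fun x => rfl)
  · -- trace identity
    intro h k
    have lhs_eq : ((List.ofFn h).reverse.prod * ρ * (List.ofFn k).prod).trace
        = ∑ p, ∑ a : Fin (mm+1) → Fin n, ∑ b : Fin (mm+1) → Fin n,
            ((∏ i, h i ((Fin.snoc (Fin.tail a) p : Fin (mm+1) → Fin n) i) (a i))
              * ρ (a 0) (b 0))
            * ∏ i, k i (b i) ((Fin.snoc (Fin.tail b) p : Fin (mm+1) → Fin n) i) := by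
      calc ((List.ofFn h).reverse.prod * ρ * (List.ofFn k).prod).trace
          = ∑ p, ∑ r, (∑ q, (List.ofFn h).reverse.prod p q * ρ q r)
              * (List.ofFn k).prod r p := by
            simp [Matrix.trace, Matrix.diag, Matrix.mul_apply]
        _ = ∑ p, ∑ r, (∑ a : Fin (mm+1) → Fin n,
              (∏ i, h i ((Fin.snoc (Fin.tail a) p : Fin (mm+1) → Fin n) i) (a i)) * ρ (a 0) r)
              * (List.ofFn k).prod r p := by
            refine Finset.sum_congr rfl fun p _ => Finset.sum_congr rfl fun r _ => ?_
            congr 1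
            rw [← helper1 (fun a : Fin (mm+1) → Fin n => a 0)
              (fun a => ∏ i, h i ((Fin.snoc (Fin.tail a) p : Fin (mm+1) → Fin n) i) (a i))
              (fun q => ρ q r)]
            refine Finset.sum_congr rfl fun q _ => ?_
            rw [revProd_entry h p q]
        _ = ∑ p, ∑ a : Fin (mm+1) → Fin n, ∑ r,
              ((∏ i, h i ((Fin.snoc (Fin.tail a) p : Fin (mm+1) → Fin n) i) (a i)) * ρ (a 0) r)
              * (List.ofFn k).prod r p := by
            refine Finset.sum_congr rfl fun p _ => ?_
            simp only [Finset.sum_mul]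
            rw [Finset.sum_comm]
        _ = _ := by
            refine Finset.sum_congr rfl fun p _ => Finset.sum_congr rfl fun a _ => ?_
            rw [← helper2 (fun b : Fin (mm+1) → Fin n => b 0)
              (fun b => ∏ i, k i (b i) ((Fin.snoc (Fin.tail b) p : Fin (mm+1) → Fin n) i))
              (fun r => (∏ i, h i ((Fin.snoc (Fin.tail a) p : Fin (mm+1) → Fin n) i) (a i))
                * ρ (a 0) r)]
            refine Finset.sum_congr rfl fun r _ => ?_
            rw [prodEntry k p r]
    have rhs_eq : (((Matrix.of fun a b : Fin (mm+1) → Fin n => ∏ i, h i (a i) (b i)) ⊗ₖ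
            (Matrix.of fun a b : Fin (mm+1) → Fin n => ∏ i, k i (a i) (b i))) * X).trace
        = ∑ a : Fin (mm+1) → Fin n, ∑ b : Fin (mm+1) → Fin n, ∑ q,
            ((∏ i, h i (a i) ((Fin.cons q (Fin.init a) : Fin (mm+1) → Fin n) i))
              * ∏ i, k i (b i) ((Fin.snoc (Fin.tail b) (a (Fin.last mm)) : Fin (mm+1) → Fin n) i))
            * ρ q (b 0) := by
      calc (((Matrix.of fun a b : Fin (mm+1) → Fin n => ∏ i, h i (a i) (b i)) ⊗ₖ
            (Matrix.of fun a b : Fin (mm+1) → Fin n => ∏ i, k i (a i) (b i))) * X).trace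
          = ∑ c : (Fin (mm+1) → Fin n) × (Fin (mm+1) → Fin n), ∑ d,
              ((Matrix.of fun a b : Fin (mm+1) → Fin n => ∏ i, h i (a i) (b i)) ⊗ₖ
               (Matrix.of fun a b : Fin (mm+1) → Fin n => ∏ i, k i (a i) (b i))) c d
              * X d c := by
            simp [Matrix.trace, Matrix.diag, Matrix.mul_apply]
        _ = ∑ c : (Fin (mm+1) → Fin n) × (Fin (mm+1) → Fin n), ∑ x : Fin n × J,
              ((Matrix.of fun a b : Fin (mm+1) → Fin n => ∏ i, h i (a i) (b i)) ⊗ₖ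
               (Matrix.of fun a b : Fin (mm+1) → Fin n => ∏ i, k i (a i) (b i))) c
                ((rowE n mm).symm x)
              * (ρ ⊗ₖ (1 : Matrix J J ℂ)) x ((colE n mm) c) := by
            refine Finset.sum_congr rfl fun c _ => ?_
            refine (Fintype.sum_equiv (rowE n mm).symm _ _ fun x => ?_).symm
            rw [hX, Matrix.submatrix_apply, Equiv.apply_symm_apply]
        _ = ∑ c : (Fin (mm+1) → Fin n) × (Fin (mm+1) → Fin n), ∑ q,
              ((Matrix.of fun a b : Fin (mm+1) → Fin n => ∏ i, h i (a i) (b i)) ⊗ₖ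
               (Matrix.of fun a b : Fin (mm+1) → Fin n => ∏ i, k i (a i) (b i))) c
                ((rowE n mm).symm (q, ((colE n mm) c).2))
              * ρ q (((colE n mm) c).1) := by
            refine Finset.sum_congr rfl fun c _ => ?_
            rw [Fintype.sum_prod_type]
            refine Finset.sum_congr rfl fun q _ => ?_
            simp only [Matrix.kroneckerMap_apply, Matrix.one_apply, mul_ite, mul_one, mul_zero,
              Finset.sum_ite_eq', Finset.mem_univ, if_true]
        _ = _ := by
            rw [Fintype.sum_prod_type]
            refine Finset.sum_congr rfl fun a _ => Finset.sum_congr rfl fun b _ => ?_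
            refine Finset.sum_congr rfl fun q _ => ?_
            simp only [rowE, colE, Equiv.coe_fn_mk, Equiv.coe_fn_symm_mk,
              Matrix.kroneckerMap_apply, Matrix.of_apply]
    rw [lhs_eq, rhs_eq]
    -- reorder sums on the right
    rw [show (∑ a : Fin (mm+1) → Fin n, ∑ b : Fin (mm+1) → Fin n, ∑ q,
            ((∏ i, h i (a i) ((Fin.cons q (Fin.init a) : Fin (mm+1) → Fin n) i))
              * ∏ i, k i (b i) ((Fin.snoc (Fin.tail b) (a (Fin.last mm)) : Fin (mm+1) → Fin n) i))
            * ρ q (b 0))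
        = ∑ qa : Fin n × (Fin (mm+1) → Fin n), ∑ b : Fin (mm+1) → Fin n,
            ((∏ i, h i (qa.2 i) ((Fin.cons qa.1 (Fin.init qa.2) : Fin (mm+1) → Fin n) i))
              * ∏ i, k i (b i)
                ((Fin.snoc (Fin.tail b) (qa.2 (Fin.last mm)) : Fin (mm+1) → Fin n) i))
            * ρ qa.1 (b 0) from by
      rw [Fintype.sum_prod_type]
      exact Eq.trans (Finset.sum_congr rfl fun a _ => Finset.sum_comm) Finset.sum_comm]
    rw [show (∑ p, ∑ a : Fin (mm+1) → Fin n, ∑ b : Fin (mm+1) → Fin n,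
            ((∏ i, h i ((Fin.snoc (Fin.tail a) p : Fin (mm+1) → Fin n) i) (a i))
              * ρ (a 0) (b 0))
            * ∏ i, k i (b i) ((Fin.snoc (Fin.tail b) p : Fin (mm+1) → Fin n) i))
        = ∑ pa : Fin n × (Fin (mm+1) → Fin n), ∑ b : Fin (mm+1) → Fin n,
            ((∏ i, h i ((Fin.snoc (Fin.tail pa.2) pa.1 : Fin (mm+1) → Fin n) i) (pa.2 i))
              * ρ (pa.2 0) (b 0))
            * ∏ i, k i (b i) ((Fin.snoc (Fin.tail b) pa.1 : Fin (mm+1) → Fin n) i) from by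
      rw [Fintype.sum_prod_type]]
    refine Fintype.sum_equiv (shiftE n mm) _ _ fun pa => ?_
    obtain ⟨p, a⟩ := pa
    refine Finset.sum_congr rfl fun b _ => ?_
    simp only [shiftE, Equiv.coe_fn_mk, Fin.snoc_last, Fin.init_snoc, Fin.cons_self_tail]
    ring
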